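/- For any θ₀ = (γ₀, μ₀, σ₀) ∈ (−1/2, ∞) × ℝ × (0, ∞), the three-parameter GEV family satisfies P_{θ₀}(ℝ \ S̄(ε)) = o(ε²) as ε ↓ 0, where S̄(ε) = ⋂_{θ ∈ ℝ×ℝ×(0,∞), ‖θ−θ₀‖<ε} S_θ is the intersection of the supports S_θ = {x ∈ ℝ : σ + γ(x − μ) > 0} over all GEV parameters θ in the ε-ball around θ₀. -/

import Mathlib

open MeasureTheory Filter Set Asymptotics

/-- `u_γ(z)` for the GEV family. -/
noncomputable def gevU (γ z : ℝ) : ℝ :=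
  if γ = 0 then Real.exp (-z) else (1 + γ * z) ^ (-γ⁻¹)

/-- Lebesgue density of the GEV distribution with parameter `θ = (γ, μ, σ)`. -/
noncomputable def gevDensity (θ : ℝ × ℝ × ℝ) (x : ℝ) : ℝ :=
  if 0 < θ.2.2 + θ.1 * (x - θ.2.1) then
    (θ.2.2)⁻¹ * Real.exp (-(gevU θ.1 ((x - θ.2.1) / θ.2.2))) *
      gevU θ.1 ((x - θ.2.1) / θ.2.2) ^ (θ.1 + 1)
  else 0

/-- The GEV probability measure with parameter `θ`. -/
noncomputable def gevMeasure (θ : ℝ × ℝ × ℝ) : Measure ℝ :=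
  MeasureTheory.volume.withDensity fun x => ENNReal.ofReal (gevDensity θ x)


lemma aux_exp_le_nat (v : ℝ) (k : ℕ) (hv : 0 < v) : Real.exp (-v) ≤ ((k : ℝ) / v) ^ k := by
  rcases Nat.eq_zero_or_pos k with hk | hk
  · subst hk
    simp only [pow_zero, Nat.cast_zero]
    exact Real.exp_le_one_iff.mpr (by linarith)
  have hk' : (0:ℝ) < k := by exact_mod_cast hk
  have h1 : v / k ≤ Real.exp (v / k) := by
    have := Real.add_one_le_exp (v / k)
    linarith
  have h2 : (v / k) ^ k ≤ Real.exp v := by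
    calc (v / k) ^ k ≤ (Real.exp (v / k)) ^ k :=
          pow_le_pow_left₀ (by positivity) h1 k
      _ = Real.exp (k * (v / k)) := (Real.exp_nat_mul _ k).symm
      _ = Real.exp v := by rw [mul_div_cancel₀ _ (ne_of_gt hk')]
  have h3 : (0:ℝ) < (v / k) ^ k := by positivity
  have h4 : Real.exp (-v) ≤ ((v / k) ^ k)⁻¹ := by
    rw [Real.exp_neg]
    exact inv_anti₀ h3 h2
  calc Real.exp (-v) ≤ ((v / k) ^ k)⁻¹ := h4
    _ = ((k:ℝ) / v) ^ k := by rw [← inv_pow, inv_div]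

/-- exp(-v) ≤ (k/v)^k  (real k) -/

lemma aux_exp_le_rpow (v k : ℝ) (hv : 0 < v) (hk : 0 < k) :
    Real.exp (-v) ≤ (k / v) ^ k := by
  have h1 : v / k ≤ Real.exp (v / k) := by
    have := Real.add_one_le_exp (v / k)
    linarith
  have h2 : (v / k) ^ k ≤ Real.exp v := by
    calc (v / k) ^ k ≤ (Real.exp (v / k)) ^ k :=
          Real.rpow_le_rpow (by positivity) h1 hk.le
      _ = Real.exp ((v / k) * k) := (Real.exp_mul _ k).symm
      _ = Real.exp v := by rw [div_mul_cancel₀ _ (ne_of_gt hk)]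
  have h3 : (0:ℝ) < (v / k) ^ k := Real.rpow_pos_of_pos (by positivity) k
  have h4 : Real.exp (-v) ≤ ((v / k) ^ k)⁻¹ := by
    rw [Real.exp_neg]
    exact inv_anti₀ h3 h2
  calc Real.exp (-v) ≤ ((v / k) ^ k)⁻¹ := h4
    _ = (k / v) ^ k := by
        rw [← Real.inv_rpow (by positivity), inv_div]

/-- reduction lemma: eventual bound by C ε^r with r>2 gives o(ε²). -/

lemma aux_reduce {f : ℝ → ℝ} (hf0 : ∀ ε, 0 ≤ f ε) {C r : ℝ} (hr : 2 < r)
    (h : ∀ᶠ ε in nhdsWithin (0:ℝ) (Set.Ioi 0), f ε ≤ C * ε ^ r) :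
    f =o[nhdsWithin (0:ℝ) (Set.Ioi 0)] (fun ε => ε ^ 2) := by
  rw [Asymptotics.isLittleO_iff]
  intro c hc
  have h1 : Filter.Tendsto (fun ε : ℝ => C * ε ^ (r - 2)) (nhdsWithin 0 (Set.Ioi 0)) (nhds 0) := by
    have h2 : Filter.Tendsto (fun ε : ℝ => ε ^ (r - 2)) (nhds 0) (nhds 0) := by
      have := (Real.continuousAt_rpow_const 0 (r - 2) (Or.inr (by linarith))).tendsto
      simpa [Real.zero_rpow (by linarith : r - 2 ≠ 0)] using this
    simpa using ((h2.const_mul C).mono_left nhdsWithin_le_nhds)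
  have h2 : ∀ᶠ ε in nhdsWithin (0:ℝ) (Set.Ioi 0), C * ε ^ (r - 2) < c :=
    h1.eventually_lt_const hc
  filter_upwards [h, h2, self_mem_nhdsWithin] with ε hfe hce hε
  have hε : (0:ℝ) < ε := hε
  have e1 : C * ε ^ r = (C * ε ^ (r - 2)) * ε ^ 2 := by
    have : ε ^ r = ε ^ (r - 2) * ε ^ (2:ℝ) := by
      rw [← Real.rpow_add hε]; ring_nf
    rw [this]
    have h2 : ε ^ (2:ℝ) = ε ^ 2 := by
      rw [show (2:ℝ) = ((2:ℕ):ℝ) by norm_num, Real.rpow_natCast]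
    rw [h2]; ring
  have key : f ε ≤ c * ε ^ 2 := by
    rw [e1] at hfe
    calc f ε ≤ (C * ε ^ (r - 2)) * ε ^ 2 := hfe
      _ ≤ c * ε ^ 2 := mul_le_mul_of_nonneg_right hce.le (sq_nonneg ε)
  calc ‖f ε‖ = f ε := Real.norm_of_nonneg (hf0 ε)
    _ ≤ c * ε ^ 2 := key
    _ = c * ‖ε ^ 2‖ := by rw [Real.norm_of_nonneg (sq_nonneg ε)]

lemma aux_lint_exp_Ioi (a b d c : ℝ) (hb : 0 < b) (hc : 0 ≤ c) :
    ∫⁻ x in Set.Ioi a, ENNReal.ofReal (c * Real.exp (-(b * (x - d)))) =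
      ENNReal.ofReal (c * Real.exp (-(b * (a - d))) / b) := by
  have hfi : IntegrableOn (fun x => c * Real.exp (-(b * (x - d)))) (Set.Ioi a) := by
    have he : (fun x : ℝ => c * Real.exp (-(b * (x - d)))) =
        fun x => (c * Real.exp (b * d)) * Real.exp (-b * x) := by
      funext x
      rw [mul_assoc, ← Real.exp_add]
      ring_nf
    rw [he]
    exact (exp_neg_integrableOn_Ioi a hb).const_mul _
  rw [← ofReal_integral_eq_lintegral_ofReal hfi
      (Filter.Eventually.of_forall fun x => by positivity)]
  congr 1
  have hderiv : ∀ x ∈ Set.Ici a,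
      HasDerivAt (fun x => -(Real.exp (-(b * (x - d))) / b))
        (Real.exp (-(b * (x - d)))) x := by
    intro x _
    have h1 : HasDerivAt (fun x : ℝ => -(b * (x - d))) (-b) x := by
      have := (((hasDerivAt_id x).sub_const d).const_mul b).neg
      simp only [mul_one] at this
      exact this
    have h2 := (h1.exp.div_const b).neg
    exact h2.congr_deriv (by field_simp)
  have htends : Filter.Tendsto (fun x => -(Real.exp (-(b * (x - d))) / b))
      Filter.atTop (nhds 0) := by
    have h1 : Filter.Tendsto (fun x : ℝ => b * (x - d)) Filter.atTop Filter.atTop := by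
      have := (Filter.tendsto_atTop_add_const_right Filter.atTop (-d) Filter.tendsto_id)
      simpa [sub_eq_add_neg] using this.const_mul_atTop hb
    have h2 : Filter.Tendsto (fun x : ℝ => -(b * (x - d))) Filter.atTop Filter.atBot :=
      Filter.tendsto_neg_atTop_atBot.comp h1
    have h3 := Real.tendsto_exp_atBot.comp h2
    simpa using (h3.div_const b).neg
  have := integral_Ioi_of_hasDerivAt_of_tendsto' hderiv
    (by
      have he : (fun x : ℝ => Real.exp (-(b * (x - d)))) =
          fun x => Real.exp (b * d) * Real.exp (-b * x) := by
        funext x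
        rw [← Real.exp_add]; ring_nf
      rw [he]
      exact (exp_neg_integrableOn_Ioi a hb).const_mul _) htends
  rw [MeasureTheory.integral_const_mul, this]
  ring

lemma aux_lint_exp_Iic (a b d c : ℝ) (hb : 1 ≤ b) (hc : 0 ≤ c) :
    ∫⁻ x in Set.Iic a, ENNReal.ofReal (c * Real.exp (b * (x - d))) =
      ENNReal.ofReal (c * Real.exp (b * (a - d)) / b) := by
  have hb0 : 0 < b := lt_of_lt_of_le one_pos hb
  have hfi : IntegrableOn (fun x => c * Real.exp (b * (x - d))) (Set.Iic a) := by
    refine Integrable.mono ((integrableOn_exp_Iic a).const_mul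
      (c * Real.exp ((b - 1) * a - b * d))) (Continuous.aestronglyMeasurable (by continuity)) ?_
    rw [ae_restrict_iff' measurableSet_Iic]
    refine Filter.Eventually.of_forall fun x hx => ?_
    have hx : x ≤ a := hx
    have key : Real.exp (b * (x - d)) ≤ Real.exp ((b - 1) * a - b * d) * Real.exp x := by
      rw [← Real.exp_add]
      apply Real.exp_le_exp.mpr
      nlinarith
    rw [Real.norm_of_nonneg (by positivity), Real.norm_of_nonneg (by positivity)]
    calc c * Real.exp (b * (x - d)) ≤ c * (Real.exp ((b - 1) * a - b * d) * Real.exp x) :=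
          mul_le_mul_of_nonneg_left key hc
      _ = c * Real.exp ((b - 1) * a - b * d) * Real.exp x := by ring
  rw [← ofReal_integral_eq_lintegral_ofReal hfi
      (Filter.Eventually.of_forall fun x => by positivity)]
  congr 1
  have hderiv : ∀ x ∈ Set.Iic a,
      HasDerivAt (fun x => c / b * Real.exp (b * (x - d)))
        (c * Real.exp (b * (x - d))) x := by
    intro x _
    have h1 : HasDerivAt (fun x : ℝ => b * (x - d)) b x := by
      simpa using ((hasDerivAt_id x).sub_const d).const_mul b
    have h2 := h1.exp.const_mul (c / b)
    exact h2.congr_deriv (by field_simp)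
  have htends : Filter.Tendsto (fun x => c / b * Real.exp (b * (x - d)))
      Filter.atBot (nhds 0) := by
    have h1 : Filter.Tendsto (fun x : ℝ => b * (x - d)) Filter.atBot Filter.atBot := by
      have := (Filter.tendsto_atBot_add_const_right Filter.atBot (-d) Filter.tendsto_id)
      simpa [sub_eq_add_neg] using this.const_mul_atBot hb0
    have h3 := Real.tendsto_exp_atBot.comp h1
    simpa using h3.const_mul (c / b)
  have := integral_Iic_of_hasDerivAt_of_tendsto' hderiv hfi htends
  rw [this]
  ring

lemma aux_meas_core (γ₀ μ₀ σ₀ : ℝ) (hγ : γ₀ ≠ 0) (L M : ℝ) (hM : 0 ≤ M)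
    (hbound : ∀ x : ℝ, 0 < σ₀ + γ₀ * (x - μ₀) → σ₀ + γ₀ * (x - μ₀) ≤ L →
      gevDensity (γ₀, μ₀, σ₀) x ≤ M) :
    gevMeasure (γ₀, μ₀, σ₀) {x | σ₀ + γ₀ * (x - μ₀) ≤ L} ≤
      ENNReal.ofReal (M * (L / |γ₀|)) := by
  have hmf : Measurable (fun x : ℝ => σ₀ + γ₀ * (x - μ₀)) := by fun_prop
  have hS : MeasurableSet {x : ℝ | σ₀ + γ₀ * (x - μ₀) ≤ L} :=
    measurableSet_le hmf measurable_const
  have hP : MeasurableSet {x : ℝ | 0 < σ₀ + γ₀ * (x - μ₀)} :=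
    measurableSet_lt measurable_const hmf
  rw [gevMeasure, withDensity_apply _ hS]
  have hvol : MeasureTheory.volume
      ({x : ℝ | 0 < σ₀ + γ₀ * (x - μ₀)} ∩ {x : ℝ | σ₀ + γ₀ * (x - μ₀) ≤ L}) ≤
      ENNReal.ofReal (L / |γ₀|) := by
    rcases hγ.lt_or_gt with hneg | hpos
    · have hsub : {x : ℝ | 0 < σ₀ + γ₀ * (x - μ₀)} ∩ {x : ℝ | σ₀ + γ₀ * (x - μ₀) ≤ L} ⊆
          Set.Ico (μ₀ + (L - σ₀) / γ₀) (μ₀ + (-σ₀) / γ₀) := by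
        rintro x ⟨hx1, hx2⟩
        simp only [Set.mem_setOf_eq] at hx1 hx2
        constructor
        · have h := (div_le_iff_of_neg hneg).mpr (show (x - μ₀) * γ₀ ≤ L - σ₀ by nlinarith)
          linarith
        · have h := (lt_div_iff_of_neg hneg).mpr (show -σ₀ < (x - μ₀) * γ₀ by nlinarith)
          linarith
      calc MeasureTheory.volume _ ≤ MeasureTheory.volume
            (Set.Ico (μ₀ + (L - σ₀) / γ₀) (μ₀ + (-σ₀) / γ₀)) := measure_mono hsub
        _ = ENNReal.ofReal ((μ₀ + (-σ₀) / γ₀) - (μ₀ + (L - σ₀) / γ₀)) := Real.volume_Ico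
        _ = ENNReal.ofReal (L / |γ₀|) := by
            congr 1
            rw [abs_of_neg hneg]
            field_simp
            ring
    · have hsub : {x : ℝ | 0 < σ₀ + γ₀ * (x - μ₀)} ∩ {x : ℝ | σ₀ + γ₀ * (x - μ₀) ≤ L} ⊆
          Set.Ioc (μ₀ + (-σ₀) / γ₀) (μ₀ + (L - σ₀) / γ₀) := by
        rintro x ⟨hx1, hx2⟩
        simp only [Set.mem_setOf_eq] at hx1 hx2
        constructor
        · have h := (div_lt_iff₀ hpos).mpr (show -σ₀ < (x - μ₀) * γ₀ by nlinarith)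
          linarith
        · have h := (le_div_iff₀ hpos).mpr (show (x - μ₀) * γ₀ ≤ L - σ₀ by nlinarith)
          linarith
      calc MeasureTheory.volume _ ≤ MeasureTheory.volume
            (Set.Ioc (μ₀ + (-σ₀) / γ₀) (μ₀ + (L - σ₀) / γ₀)) := measure_mono hsub
        _ = ENNReal.ofReal ((μ₀ + (L - σ₀) / γ₀) - (μ₀ + (-σ₀) / γ₀)) := Real.volume_Ioc
        _ = ENNReal.ofReal (L / |γ₀|) := by
            congr 1
            rw [abs_of_pos hpos]
            field_simp
            ring
  calc ∫⁻ x in {x : ℝ | σ₀ + γ₀ * (x - μ₀) ≤ L}, ENNReal.ofReal (gevDensity (γ₀, μ₀, σ₀) x)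
      ≤ ∫⁻ x in {x : ℝ | σ₀ + γ₀ * (x - μ₀) ≤ L},
          Set.indicator {x : ℝ | 0 < σ₀ + γ₀ * (x - μ₀)} (fun _ => ENNReal.ofReal M) x := by
        refine setLIntegral_mono' hS fun x hxS => ?_
        by_cases hx : x ∈ {x : ℝ | 0 < σ₀ + γ₀ * (x - μ₀)}
        · rw [Set.indicator_of_mem hx]
          exact ENNReal.ofReal_le_ofReal (hbound x hx hxS)
        · rw [Set.indicator_of_notMem hx]
          have : gevDensity (γ₀, μ₀, σ₀) x = 0 := by
            have hx' : ¬ (0 < σ₀ + γ₀ * (x - μ₀)) := hx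
            simp only [gevDensity]
            rw [if_neg hx']
          simp [this]
    _ = ENNReal.ofReal M * MeasureTheory.volume
          ({x : ℝ | 0 < σ₀ + γ₀ * (x - μ₀)} ∩ {x : ℝ | σ₀ + γ₀ * (x - μ₀) ≤ L}) := by
        rw [lintegral_indicator hP, setLIntegral_const, Measure.restrict_apply hP]
    _ ≤ ENNReal.ofReal M * ENNReal.ofReal (L / |γ₀|) := mul_le_mul_right hvol _
    _ = ENNReal.ofReal (M * (L / |γ₀|)) := (ENNReal.ofReal_mul hM).symm

lemma aux_base (γ₀ μ₀ σ₀ x : ℝ) (hσ : 0 < σ₀) :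
    1 + γ₀ * ((x - μ₀) / σ₀) = (σ₀ + γ₀ * (x - μ₀)) / σ₀ := by
  field_simp

lemma aux_density_neg (γ₀ μ₀ σ₀ : ℝ) (hσ : 0 < σ₀) (hγh : -(1/2) < γ₀) (hγ : γ₀ < 0)
    (x L : ℝ) (ht0 : 0 < σ₀ + γ₀ * (x - μ₀)) (htL : σ₀ + γ₀ * (x - μ₀) ≤ L) :
    gevDensity (γ₀, μ₀, σ₀) x ≤ σ₀⁻¹ * (L / σ₀) ^ (-1 - γ₀⁻¹) := by
  have hγne : γ₀ ≠ 0 := ne_of_lt hγ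
  have hq : (0:ℝ) ≤ -1 - γ₀⁻¹ := by
    have h1 : γ₀⁻¹ ≤ -2 := by
      rw [← one_div, div_le_iff_of_neg hγ]
      linarith
    linarith
  simp only [gevDensity, gevU]
  rw [if_pos ht0, if_neg hγne, aux_base γ₀ μ₀ σ₀ x hσ]
  set t := σ₀ + γ₀ * (x - μ₀) with ht
  have hbase : (0:ℝ) < t / σ₀ := div_pos ht0 hσ
  have hu : (0:ℝ) < (t / σ₀) ^ (-γ₀⁻¹) := Real.rpow_pos_of_pos hbase _
  have h1 : Real.exp (-(t / σ₀) ^ (-γ₀⁻¹)) ≤ 1 := Real.exp_le_one_iff.mpr (by linarith)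
  have h2 : ((t / σ₀) ^ (-γ₀⁻¹)) ^ (γ₀ + 1) = (t / σ₀) ^ (-1 - γ₀⁻¹) := by
    rw [← Real.rpow_mul hbase.le]
    congr 1
    field_simp
    ring
  calc σ₀⁻¹ * Real.exp (-(t / σ₀) ^ (-γ₀⁻¹)) * ((t / σ₀) ^ (-γ₀⁻¹)) ^ (γ₀ + 1)
      ≤ σ₀⁻¹ * 1 * ((t / σ₀) ^ (-γ₀⁻¹)) ^ (γ₀ + 1) := by
        apply mul_le_mul_of_nonneg_right _ (Real.rpow_nonneg hu.le _)
        exact mul_le_mul_of_nonneg_left h1 (by positivity)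
    _ = (t / σ₀) ^ (-1 - γ₀⁻¹) * σ₀⁻¹ := by rw [h2]; ring
    _ ≤ (L / σ₀) ^ (-1 - γ₀⁻¹) * σ₀⁻¹ := by
        apply mul_le_mul_of_nonneg_right _ (by positivity)
        exact Real.rpow_le_rpow hbase.le ((div_le_div_iff_of_pos_right hσ).mpr htL) hq
    _ = σ₀⁻¹ * (L / σ₀) ^ (-1 - γ₀⁻¹) := by ring

lemma aux_density_pos (γ₀ μ₀ σ₀ : ℝ) (hσ : 0 < σ₀) (hγ : 0 < γ₀)
    (x L : ℝ) (ht0 : 0 < σ₀ + γ₀ * (x - μ₀)) (htL : σ₀ + γ₀ * (x - μ₀) ≤ L) :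
    gevDensity (γ₀, μ₀, σ₀) x ≤
      σ₀⁻¹ * (3 * γ₀ + 1) ^ (3 * γ₀ + 1) * (L / σ₀) ^ (2:ℝ) := by
  have hγne : γ₀ ≠ 0 := ne_of_gt hγ
  have hk : (0:ℝ) < 3 * γ₀ + 1 := by linarith
  simp only [gevDensity, gevU]
  rw [if_pos ht0, if_neg hγne, aux_base γ₀ μ₀ σ₀ x hσ]
  set t := σ₀ + γ₀ * (x - μ₀) with ht
  set k := 3 * γ₀ + 1 with hkdef
  have hbase : (0:ℝ) < t / σ₀ := div_pos ht0 hσ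
  set u := (t / σ₀) ^ (-γ₀⁻¹) with hudef
  have hu : (0:ℝ) < u := Real.rpow_pos_of_pos hbase _
  have h1 : Real.exp (-u) ≤ (k / u) ^ k := aux_exp_le_rpow u k hu hk
  have h2 : (k / u) ^ k * u ^ (γ₀ + 1) = k ^ k * u ^ (γ₀ + 1 - k) := by
    rw [Real.div_rpow hk.le hu.le, div_mul_eq_mul_div, mul_div_assoc, ← Real.rpow_sub hu]
  have h3 : u ^ (γ₀ + 1 - k) = (t / σ₀) ^ (2:ℝ) := by
    rw [hudef, ← Real.rpow_mul hbase.le]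
    congr 1
    rw [hkdef]
    field_simp
    ring
  calc σ₀⁻¹ * Real.exp (-u) * u ^ (γ₀ + 1)
      ≤ σ₀⁻¹ * (k / u) ^ k * u ^ (γ₀ + 1) := by
        apply mul_le_mul_of_nonneg_right _ (Real.rpow_nonneg hu.le _)
        exact mul_le_mul_of_nonneg_left h1 (by positivity)
    _ = σ₀⁻¹ * (k ^ k * u ^ (γ₀ + 1 - k)) := by rw [mul_assoc, h2]
    _ = σ₀⁻¹ * k ^ k * (t / σ₀) ^ (2:ℝ) := by rw [h3]; ring
    _ ≤ σ₀⁻¹ * k ^ k * (L / σ₀) ^ (2:ℝ) := by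
        apply mul_le_mul_of_nonneg_left _ (by positivity)
        exact Real.rpow_le_rpow hbase.le ((div_le_div_iff_of_pos_right hσ).mpr htL) (by norm_num)

lemma aux_compl (γ₀ μ₀ σ₀ ε x : ℝ)
    (hx : x ∈ {x : ℝ | ∀ θ : ℝ × ℝ × ℝ, 0 < θ.2.2 → ‖θ - ((γ₀, μ₀, σ₀) : ℝ × ℝ × ℝ)‖ < ε →
      0 < θ.2.2 + θ.1 * (x - θ.2.1)}ᶜ) :
    ∃ γ μ σ : ℝ, 0 < σ ∧ |γ - γ₀| < ε ∧ |μ - μ₀| < ε ∧ |σ - σ₀| < ε ∧ σ + γ * (x - μ) ≤ 0 := by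
  simp only [Set.mem_compl_iff, Set.mem_setOf_eq, not_forall] at hx
  push_neg at hx
  obtain ⟨θ, hσθ, hnorm, hle⟩ := hx
  refine ⟨θ.1, θ.2.1, θ.2.2, hσθ, ?_, ?_, ?_, hle⟩
  · have h1 := norm_fst_le (θ - ((γ₀, μ₀, σ₀) : ℝ × ℝ × ℝ))
    simp only [Prod.fst_sub] at h1
    rw [Real.norm_eq_abs] at h1
    exact lt_of_le_of_lt h1 hnorm
  · have h1 := norm_snd_le (θ - ((γ₀, μ₀, σ₀) : ℝ × ℝ × ℝ))
    have h2 := norm_fst_le (θ - ((γ₀, μ₀, σ₀) : ℝ × ℝ × ℝ)).2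
    simp only [Prod.snd_sub, Prod.fst_sub] at h1 h2
    rw [Real.norm_eq_abs] at h2
    exact lt_of_le_of_lt (h2.trans h1) hnorm
  · have h1 := norm_snd_le (θ - ((γ₀, μ₀, σ₀) : ℝ × ℝ × ℝ))
    have h2 := norm_snd_le (θ - ((γ₀, μ₀, σ₀) : ℝ × ℝ × ℝ)).2
    simp only [Prod.snd_sub] at h1 h2
    rw [Real.norm_eq_abs] at h2
    exact lt_of_le_of_lt (h2.trans h1) hnorm

lemma aux_arith_neg (γ₀ μ₀ σ₀ ε x γ μ σ : ℝ) (hσ0 : 0 < σ₀) (hγ : γ₀ < 0)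
    (hε : 0 < ε) (hε1 : ε ≤ 1) (hεγ : ε < -γ₀ / 2) (hεσ : ε < σ₀ / 2)
    (hσ : 0 < σ) (h1 : |γ - γ₀| < ε) (h2 : |μ - μ₀| < ε) (h3 : |σ - σ₀| < ε)
    (h0 : σ + γ * (x - μ) ≤ 0) :
    σ₀ + γ₀ * (x - μ₀) ≤ ((σ₀ + γ₀ ^ 2 - 2 * γ₀) / (-γ₀)) * ε := by
  obtain ⟨h1a, h1b⟩ := abs_lt.mp h1
  obtain ⟨h2a, h2b⟩ := abs_lt.mp h2
  obtain ⟨h3a, h3b⟩ := abs_lt.mp h3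
  have hγ0 : 0 < -γ₀ := neg_pos.mpr hγ
  set K := (σ₀ + γ₀ ^ 2 - 2 * γ₀) / (-γ₀) with hKdef
  have hK : K * (-γ₀) = σ₀ + γ₀ ^ 2 - 2 * γ₀ := div_mul_cancel₀ _ (ne_of_gt hγ0)
  have hKpos : 0 < K := div_pos (by nlinarith) hγ0
  have hγneg : γ < 0 := by linarith
  have hA : 0 < -γ₀ + ε := by linarith
  have hxμ : 0 ≤ x - μ := by
    by_contra h
    push_neg at h
    nlinarith [mul_pos (show 0 < -γ by linarith) (show 0 < -(x - μ) by linarith)]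
  have h4 : σ₀ - ε ≤ (x - μ) * (-γ₀ + ε) := by
    have h5 : σ ≤ (x - μ) * (-γ) := by nlinarith
    have h6 : (x - μ) * (-γ) ≤ (x - μ) * (-γ₀ + ε) := by
      apply mul_le_mul_of_nonneg_left _ hxμ
      linarith
    linarith
  have h8 : (σ₀ - ε) / (-γ₀ + ε) ≤ x - μ := by
    rw [div_le_iff₀ hA]
    linarith
  have h9 : (σ₀ - ε) / (-γ₀ + ε) - ε ≤ x - μ₀ := by linarith
  have h10 : σ₀ + γ₀ * (x - μ₀) ≤ σ₀ + γ₀ * ((σ₀ - ε) / (-γ₀ + ε) - ε) := by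
    have := mul_le_mul_of_nonneg_left h9 hγ0.le
    nlinarith
  refine h10.trans ?_
  have h11 : γ₀ * ((σ₀ - ε) / (-γ₀ + ε) - ε) = γ₀ * (σ₀ - ε) / (-γ₀ + ε) - γ₀ * ε := by
    ring
  rw [h11]
  have h12 : γ₀ * (σ₀ - ε) / (-γ₀ + ε) ≤ K * ε - σ₀ + γ₀ * ε := by
    rw [div_le_iff₀ hA]
    nlinarith [mul_pos hKpos (mul_pos hε hε), mul_pos hγ0 hε,
      mul_le_mul_of_nonneg_left hε1 (mul_pos hγ0 hε).le]
  linarith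

lemma aux_arith_pos (γ₀ μ₀ σ₀ ε x γ μ σ : ℝ) (hσ0 : 0 < σ₀) (hγ : 0 < γ₀)
    (hε : 0 < ε) (hε1 : ε ≤ 1) (hεγ : ε < γ₀ / 2) (hεσ : ε < σ₀ / 2)
    (hσ : 0 < σ) (h1 : |γ - γ₀| < ε) (h2 : |μ - μ₀| < ε) (h3 : |σ - σ₀| < ε)
    (h0 : σ + γ * (x - μ) ≤ 0) :
    σ₀ + γ₀ * (x - μ₀) ≤ ((σ₀ + γ₀ ^ 2 + 2 * γ₀) / γ₀) * ε := by
  obtain ⟨h1a, h1b⟩ := abs_lt.mp h1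
  obtain ⟨h2a, h2b⟩ := abs_lt.mp h2
  obtain ⟨h3a, h3b⟩ := abs_lt.mp h3
  set K := (σ₀ + γ₀ ^ 2 + 2 * γ₀) / γ₀ with hKdef
  have hK : K * γ₀ = σ₀ + γ₀ ^ 2 + 2 * γ₀ := div_mul_cancel₀ _ (ne_of_gt hγ)
  have hKpos : 0 < K := div_pos (by nlinarith) hγ
  have hγpos : 0 < γ := by linarith
  have hA : 0 < γ₀ + ε := by linarith
  have hxμ : x - μ ≤ 0 := by
    by_contra h
    push_neg at h
    nlinarith [mul_pos hγpos (show 0 < x - μ by linarith)]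
  have h4 : σ₀ - ε ≤ (μ - x) * (γ₀ + ε) := by
    have h5 : σ ≤ (μ - x) * γ := by nlinarith
    have h6 : (μ - x) * γ ≤ (μ - x) * (γ₀ + ε) := by
      apply mul_le_mul_of_nonneg_left _ (by linarith)
      linarith
    linarith
  have h8 : (σ₀ - ε) / (γ₀ + ε) ≤ μ - x := by
    rw [div_le_iff₀ hA]
    linarith
  have h9 : x - μ₀ ≤ ε - (σ₀ - ε) / (γ₀ + ε) := by linarith
  have h10 : σ₀ + γ₀ * (x - μ₀) ≤ σ₀ + γ₀ * (ε - (σ₀ - ε) / (γ₀ + ε)) := by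
    have := mul_le_mul_of_nonneg_left h9 hγ.le
    nlinarith
  refine h10.trans ?_
  have h11 : γ₀ * (ε - (σ₀ - ε) / (γ₀ + ε)) = γ₀ * ε - γ₀ * (σ₀ - ε) / (γ₀ + ε) := by
    ring
  rw [h11]
  have h12 : σ₀ + γ₀ * ε - K * ε ≤ γ₀ * (σ₀ - ε) / (γ₀ + ε) := by
    rw [le_div_iff₀ hA]
    nlinarith [mul_pos hKpos (mul_pos hε hε), mul_pos hγ hε,
      mul_le_mul_of_nonneg_left hε1 (mul_pos hγ hε).le]
  linarith

lemma aux_density_zero_upper (μ₀ σ₀ x : ℝ) (hσ : 0 < σ₀) :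
    gevDensity (0, μ₀, σ₀) x ≤ σ₀⁻¹ * Real.exp (-(1 / σ₀ * (x - μ₀))) := by
  have hcond : (0:ℝ) < σ₀ + (0:ℝ) * (x - μ₀) := by simpa using hσ
  simp only [gevDensity, gevU]
  rw [if_pos hcond]
  simp only [if_true]
  rw [zero_add, Real.rpow_one]
  have harg : -(1 / σ₀ * (x - μ₀)) = -((x - μ₀) / σ₀) := by ring
  rw [harg]
  set w := Real.exp (-((x - μ₀) / σ₀)) with hw
  have hwpos : 0 < w := Real.exp_pos _
  have h1 : Real.exp (-w) ≤ 1 := Real.exp_le_one_iff.mpr (by linarith)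
  calc σ₀⁻¹ * Real.exp (-w) * w ≤ σ₀⁻¹ * 1 * w := by
        apply mul_le_mul_of_nonneg_right _ hwpos.le
        exact mul_le_mul_of_nonneg_left h1 (by positivity)
    _ = σ₀⁻¹ * w := by ring

lemma aux_density_zero_lower (μ₀ σ₀ x : ℝ) (hσ : 0 < σ₀) (m : ℕ) :
    gevDensity (0, μ₀, σ₀) x ≤
      σ₀⁻¹ * ((m:ℝ) + 1) ^ (m + 1) * Real.exp ((m / σ₀) * (x - μ₀)) := by
  have hcond : (0:ℝ) < σ₀ + (0:ℝ) * (x - μ₀) := by simpa using hσ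
  simp only [gevDensity, gevU]
  rw [if_pos hcond]
  simp only [if_true]
  rw [zero_add, Real.rpow_one]
  set z := (x - μ₀) / σ₀ with hz
  set w := Real.exp (-z) with hw
  have hwpos : 0 < w := Real.exp_pos _
  have h1 : Real.exp (-w) ≤ (((m:ℝ) + 1) / w) ^ (m + 1) := by
    have := aux_exp_le_nat w (m + 1) hwpos
    push_cast at this
    exact this
  have h2 : (((m:ℝ) + 1) / w) ^ (m + 1) * w = ((m:ℝ) + 1) ^ (m + 1) * (w⁻¹) ^ m := by
    rw [div_pow]
    field_simp
    rw [pow_succ, one_div, inv_pow]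
    field_simp
  have h3 : (w⁻¹) ^ m = Real.exp ((m / σ₀) * (x - μ₀)) := by
    rw [hw, ← Real.exp_neg, neg_neg, ← Real.exp_nat_mul, hz]
    congr 1
    field_simp
  calc σ₀⁻¹ * Real.exp (-w) * w ≤ σ₀⁻¹ * ((((m:ℝ) + 1) / w) ^ (m + 1)) * w := by
        apply mul_le_mul_of_nonneg_right _ hwpos.le
        exact mul_le_mul_of_nonneg_left h1 (by positivity)
    _ = σ₀⁻¹ * (((((m:ℝ) + 1) / w) ^ (m + 1)) * w) := by ring
    _ = σ₀⁻¹ * (((m:ℝ) + 1) ^ (m + 1) * (w⁻¹) ^ m) := by rw [h2]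
    _ = σ₀⁻¹ * ((m:ℝ) + 1) ^ (m + 1) * Real.exp ((m / σ₀) * (x - μ₀)) := by
        rw [h3]; ring

lemma aux_arith_zero (μ₀ σ₀ ε x γ μ σ : ℝ) (hσ0 : 0 < σ₀)
    (hε : 0 < ε) (hε1 : ε ≤ 1) (hεσ : ε ≤ σ₀ / 8)
    (hσ : 0 < σ) (h1 : |γ - 0| < ε) (h2 : |μ - μ₀| < ε) (h3 : |σ - σ₀| < ε)
    (h0 : σ + γ * (x - μ) ≤ 0) :
    x ∈ Set.Iio (μ₀ - σ₀ / (4 * ε)) ∪ Set.Ioi (μ₀ + σ₀ / (4 * ε)) := by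
  rw [sub_zero] at h1
  obtain ⟨h2a, h2b⟩ := abs_lt.mp h2
  obtain ⟨h3a, h3b⟩ := abs_lt.mp h3
  have hσε : 0 < σ₀ - ε := by linarith
  have habs1 : σ₀ - ε ≤ |γ * (x - μ)| := by
    apply le_abs.mpr
    right
    nlinarith
  rw [abs_mul] at habs1
  have hγpos : 0 < |γ| := by
    rcases eq_or_ne γ 0 with h | h
    · exfalso; rw [h] at h0; simp at h0; linarith
    · exact abs_pos.mpr h
  have hxμpos : 0 < |x - μ| := by
    by_contra h
    push_neg at h
    have : |x - μ| = 0 := le_antisymm h (abs_nonneg _)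
    rw [this, mul_zero] at habs1
    linarith
  have habs2 : (σ₀ - ε) / ε < |x - μ| := by
    rw [div_lt_iff₀ hε]
    calc σ₀ - ε ≤ |γ| * |x - μ| := habs1
      _ < ε * |x - μ| := by
          apply mul_lt_mul_of_pos_right (lt_of_abs_lt ?_) hxμpos
          rwa [abs_abs]
      _ = |x - μ| * ε := by ring
  have htri : |x - μ| ≤ |x - μ₀| + ε := by
    calc |x - μ| = |(x - μ₀) + (μ₀ - μ)| := by ring_nf
      _ ≤ |x - μ₀| + |μ₀ - μ| := abs_add_le _ _
      _ ≤ |x - μ₀| + ε := by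
          have : |μ₀ - μ| = |μ - μ₀| := abs_sub_comm _ _
          rw [this]
          linarith [abs_lt.mpr ⟨h2a, h2b⟩]
  have hT : σ₀ / (4 * ε) < |x - μ₀| := by
    have heq : (σ₀ - ε) / ε - ε = (σ₀ - ε - ε ^ 2) / ε := by
      field_simp
    have hle : σ₀ / (4 * ε) ≤ (σ₀ - ε - ε ^ 2) / ε := by
      rw [div_le_div_iff₀ (by positivity) hε]
      nlinarith [mul_le_mul_of_nonneg_left hεσ hε.le,
        mul_le_mul_of_nonneg_left hε1 (mul_pos hε hε).le]
    calc σ₀ / (4 * ε) ≤ (σ₀ - ε - ε ^ 2) / ε := hle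
      _ = (σ₀ - ε) / ε - ε := heq.symm
      _ < |x - μ| - ε := by linarith
      _ ≤ |x - μ₀| := by linarith
  rcases lt_abs.mp hT with h | h
  · right
    simp only [Set.mem_Ioi]
    linarith
  · left
    simp only [Set.mem_Iio]
    linarith

/-- **Support condition for the GEV family**: for `θ₀ = (γ₀, μ₀, σ₀)` with `γ₀ > −1/2`,
`σ₀ > 0`, `P_{θ₀}(ℝ \ S̄(ε)) = o(ε²)` as `ε ↓ 0`, where
`S̄(ε) = ⋂_{θ ∈ ℝ×ℝ×(0,∞), ‖θ−θ₀‖<ε} S_θ` with `S_θ = {x : σ + γ(x − μ) > 0}`. -/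
theorem gev_support_condition (θ₀ : ℝ × ℝ × ℝ) (hγ : -(1/2) < θ₀.1) (hσ : 0 < θ₀.2.2) :
    (fun ε : ℝ =>
        (gevMeasure θ₀
          {x : ℝ | ∀ θ : ℝ × ℝ × ℝ, 0 < θ.2.2 → ‖θ - θ₀‖ < ε →
            0 < θ.2.2 + θ.1 * (x - θ.2.1)}ᶜ).toReal)
      =o[nhdsWithin 0 (Set.Ioi 0)] fun ε => ε ^ 2 := by
  obtain ⟨γ₀, μ₀, σ₀⟩ := θ₀
  replace hγ : -(1/2) < γ₀ := hγ
  replace hσ : 0 < σ₀ := hσ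
  rcases lt_trichotomy γ₀ 0 with hneg | hzero | hpos
  · -- case γ₀ < 0
    have hγ0 : 0 < -γ₀ := neg_pos.mpr hneg
    set K := (σ₀ + γ₀ ^ 2 - 2 * γ₀) / (-γ₀) with hKdef
    have hKpos : 0 < K := div_pos (by nlinarith) hγ0
    set q := -1 - γ₀⁻¹ with hqdef
    have hq1 : 1 < q := by
      have h2 : γ₀⁻¹ < -2 := by
        rw [← one_div, div_lt_iff_of_neg hneg]
        linarith
      simp only [hqdef]
      linarith
    refine aux_reduce (fun ε => ENNReal.toReal_nonneg)
      (C := σ₀⁻¹ * (K / σ₀) ^ q * (K / (-γ₀))) (show (2:ℝ) < q + 1 by linarith) ?_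
    have hε₀ : (0:ℝ) < min 1 (min (-γ₀/2) (σ₀/2)) :=
      lt_min one_pos (lt_min (by linarith) (by linarith))
    filter_upwards [Ioo_mem_nhdsGT_of_mem (left_mem_Ico.mpr hε₀)] with ε hε
    obtain ⟨hε0, hεlt⟩ := hε
    have hε1 : ε ≤ 1 := hεlt.le.trans (min_le_left _ _)
    have hεγ : ε < -γ₀/2 := lt_of_lt_of_le hεlt ((min_le_right _ _).trans (min_le_left _ _))
    have hεσ : ε < σ₀/2 := lt_of_lt_of_le hεlt ((min_le_right _ _).trans (min_le_right _ _))
    set M := σ₀⁻¹ * ((K * ε) / σ₀) ^ q with hMdef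
    have hMnn : 0 ≤ M := mul_nonneg (by positivity) (Real.rpow_nonneg (by positivity) _)
    have hsub : {x : ℝ | ∀ θ : ℝ × ℝ × ℝ, 0 < θ.2.2 →
        ‖θ - ((γ₀, μ₀, σ₀) : ℝ × ℝ × ℝ)‖ < ε → 0 < θ.2.2 + θ.1 * (x - θ.2.1)}ᶜ ⊆
        {x : ℝ | σ₀ + γ₀ * (x - μ₀) ≤ K * ε} := by
      intro x hx
      obtain ⟨γ, μ, σ, hσ', h1, h2, h3, h0⟩ := aux_compl γ₀ μ₀ σ₀ ε x hx
      exact aux_arith_neg γ₀ μ₀ σ₀ ε x γ μ σ hσ hneg hε0 hε1 hεγ hεσ hσ' h1 h2 h3 h0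
    have hbound : ∀ x : ℝ, 0 < σ₀ + γ₀ * (x - μ₀) → σ₀ + γ₀ * (x - μ₀) ≤ K * ε →
        gevDensity (γ₀, μ₀, σ₀) x ≤ M :=
      fun x hx1 hx2 => aux_density_neg γ₀ μ₀ σ₀ hσ hγ hneg x (K * ε) hx1 hx2
    have hcore := aux_meas_core γ₀ μ₀ σ₀ (ne_of_lt hneg) (K * ε) M hMnn hbound
    have hmono := measure_mono (μ := gevMeasure ((γ₀, μ₀, σ₀) : ℝ × ℝ × ℝ)) hsub
    calc (gevMeasure ((γ₀, μ₀, σ₀) : ℝ × ℝ × ℝ)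
          {x : ℝ | ∀ θ : ℝ × ℝ × ℝ, 0 < θ.2.2 →
            ‖θ - ((γ₀, μ₀, σ₀) : ℝ × ℝ × ℝ)‖ < ε → 0 < θ.2.2 + θ.1 * (x - θ.2.1)}ᶜ).toReal
        ≤ (ENNReal.ofReal (M * (K * ε / |γ₀|))).toReal :=
          ENNReal.toReal_mono ENNReal.ofReal_ne_top (le_trans hmono hcore)
      _ = M * (K * ε / |γ₀|) := ENNReal.toReal_ofReal (mul_nonneg hMnn (by positivity))
      _ = σ₀⁻¹ * (K / σ₀) ^ q * (K / (-γ₀)) * ε ^ (q + 1) := by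
          rw [hMdef, show (K * ε) / σ₀ = (K / σ₀) * ε by ring,
            Real.mul_rpow (by positivity) hε0.le,
            Real.rpow_add_one (ne_of_gt hε0), abs_of_neg hneg]
          ring
  · -- case γ₀ = 0
    subst hzero
    set m : ℕ := ⌈σ₀⌉₊ + 1 with hmdef
    have hm1 : (1:ℝ) ≤ (m:ℝ) := by
      have : 1 ≤ m := by omega
      exact_mod_cast this
    have hmσ : σ₀ ≤ (m:ℝ) := by
      have h := Nat.le_ceil σ₀
      have : ((⌈σ₀⌉₊ : ℕ) : ℝ) ≤ (m:ℝ) := by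
        rw [hmdef]; push_cast; linarith
      linarith
    have hb1 : 1 ≤ (m:ℝ)/σ₀ := (one_le_div hσ).mpr hmσ
    have hb0 : 0 < (m:ℝ)/σ₀ := lt_of_lt_of_le one_pos hb1
    have hc'nn : 0 ≤ σ₀⁻¹ * ((m:ℝ)+1)^(m+1) := by positivity
    refine aux_reduce (fun ε => ENNReal.toReal_nonneg)
      (C := 1728 * (1 + (σ₀⁻¹ * ((m:ℝ)+1)^(m+1)) / ((m:ℝ)/σ₀)))
      (show (2:ℝ) < 3 by norm_num) ?_
    have hε₀ : (0:ℝ) < min 1 (σ₀/8) := lt_min one_pos (by linarith)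
    filter_upwards [Ioo_mem_nhdsGT_of_mem (left_mem_Ico.mpr hε₀)] with ε hε
    obtain ⟨hε0, hεlt⟩ := hε
    have hε1 : ε ≤ 1 := hεlt.le.trans (min_le_left _ _)
    have hεσ : ε ≤ σ₀/8 := hεlt.le.trans (min_le_right _ _)
    have hsub : {x : ℝ | ∀ θ : ℝ × ℝ × ℝ, 0 < θ.2.2 →
        ‖θ - ((0, μ₀, σ₀) : ℝ × ℝ × ℝ)‖ < ε → 0 < θ.2.2 + θ.1 * (x - θ.2.1)}ᶜ ⊆
        Set.Iio (μ₀ - σ₀/(4*ε)) ∪ Set.Ioi (μ₀ + σ₀/(4*ε)) := by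
      intro x hx
      obtain ⟨γ, μ, σ, hσ', h1, h2, h3, h0⟩ := aux_compl 0 μ₀ σ₀ ε x hx
      exact aux_arith_zero μ₀ σ₀ ε x γ μ σ hσ hε0 hε1 hεσ hσ' h1 h2 h3 h0
    have hIoi : gevMeasure ((0, μ₀, σ₀) : ℝ × ℝ × ℝ) (Set.Ioi (μ₀ + σ₀/(4*ε))) ≤
        ENNReal.ofReal (σ₀⁻¹ * Real.exp (-(1/σ₀ * ((μ₀ + σ₀/(4*ε)) - μ₀))) / (1/σ₀)) := by
      rw [gevMeasure, withDensity_apply _ measurableSet_Ioi]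
      refine le_of_le_of_eq (setLIntegral_mono' measurableSet_Ioi fun x _ =>
        ENNReal.ofReal_le_ofReal (aux_density_zero_upper μ₀ σ₀ x hσ)) ?_
      exact aux_lint_exp_Ioi (μ₀ + σ₀/(4*ε)) (1/σ₀) μ₀ σ₀⁻¹ (by positivity) (by positivity)
    have hIio : gevMeasure ((0, μ₀, σ₀) : ℝ × ℝ × ℝ) (Set.Iio (μ₀ - σ₀/(4*ε))) ≤
        ENNReal.ofReal ((σ₀⁻¹ * ((m:ℝ)+1)^(m+1)) *
          Real.exp (((m:ℝ)/σ₀) * ((μ₀ - σ₀/(4*ε)) - μ₀)) / ((m:ℝ)/σ₀)) := by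
      rw [gevMeasure, withDensity_apply _ measurableSet_Iio]
      calc ∫⁻ x in Set.Iio (μ₀ - σ₀/(4*ε)),
            ENNReal.ofReal (gevDensity ((0, μ₀, σ₀) : ℝ × ℝ × ℝ) x)
          ≤ ∫⁻ x in Set.Iic (μ₀ - σ₀/(4*ε)),
            ENNReal.ofReal (gevDensity ((0, μ₀, σ₀) : ℝ × ℝ × ℝ) x) :=
            lintegral_mono_set Set.Iio_subset_Iic_self
        _ ≤ ∫⁻ x in Set.Iic (μ₀ - σ₀/(4*ε)),
              ENNReal.ofReal ((σ₀⁻¹ * ((m:ℝ)+1)^(m+1)) * Real.exp (((m:ℝ)/σ₀) * (x - μ₀))) :=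
            setLIntegral_mono' measurableSet_Iic fun x _ =>
              ENNReal.ofReal_le_ofReal (by
                have h := aux_density_zero_lower μ₀ σ₀ x hσ m
                calc gevDensity ((0, μ₀, σ₀) : ℝ × ℝ × ℝ) x
                    ≤ σ₀⁻¹ * ((m:ℝ) + 1) ^ (m + 1) * Real.exp ((m / σ₀) * (x - μ₀)) := h
                  _ = (σ₀⁻¹ * ((m:ℝ)+1)^(m+1)) * Real.exp (((m:ℝ)/σ₀) * (x - μ₀)) := by ring)
        _ = _ := aux_lint_exp_Iic (μ₀ - σ₀/(4*ε)) ((m:ℝ)/σ₀) μ₀ _ hb1 hc'nn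
    have htotal := le_trans (measure_mono (μ := gevMeasure ((0, μ₀, σ₀) : ℝ × ℝ × ℝ)) hsub)
      (le_trans (measure_union_le _ _) (add_le_add hIio hIoi))
    have hAnn : (0:ℝ) ≤ (σ₀⁻¹ * ((m:ℝ)+1)^(m+1)) *
        Real.exp (((m:ℝ)/σ₀) * ((μ₀ - σ₀/(4*ε)) - μ₀)) / ((m:ℝ)/σ₀) := by positivity
    have hBnn : (0:ℝ) ≤ σ₀⁻¹ * Real.exp (-(1/σ₀ * ((μ₀ + σ₀/(4*ε)) - μ₀))) / (1/σ₀) := by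
      positivity
    have hsum : ENNReal.ofReal ((σ₀⁻¹ * ((m:ℝ)+1)^(m+1)) *
          Real.exp (((m:ℝ)/σ₀) * ((μ₀ - σ₀/(4*ε)) - μ₀)) / ((m:ℝ)/σ₀)) +
        ENNReal.ofReal (σ₀⁻¹ * Real.exp (-(1/σ₀ * ((μ₀ + σ₀/(4*ε)) - μ₀))) / (1/σ₀)) =
        ENNReal.ofReal ((σ₀⁻¹ * ((m:ℝ)+1)^(m+1)) *
          Real.exp (((m:ℝ)/σ₀) * ((μ₀ - σ₀/(4*ε)) - μ₀)) / ((m:ℝ)/σ₀) +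
          σ₀⁻¹ * Real.exp (-(1/σ₀ * ((μ₀ + σ₀/(4*ε)) - μ₀))) / (1/σ₀)) :=
      (ENNReal.ofReal_add hAnn hBnn).symm
    rw [hsum] at htotal
    -- real-number estimates
    have hexp : Real.exp (-(1/(4*ε))) ≤ 1728 * ε^3 := by
      have h := aux_exp_le_nat (1/(4*ε)) 3 (by positivity)
      have h2 : ((3:ℕ):ℝ)/(1/(4*ε)) = 12*ε := by
        field_simp
        ring
      calc Real.exp (-(1/(4*ε))) ≤ (((3:ℕ):ℝ)/(1/(4*ε)))^(3:ℕ) := h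
        _ = (12*ε)^(3:ℕ) := by rw [h2]
        _ = 1728 * ε^3 := by ring
    have hargA : ((m:ℝ)/σ₀) * ((μ₀ - σ₀/(4*ε)) - μ₀) = -((m:ℝ)/(4*ε)) := by
      field_simp
      ring
    have hargB : -(1/σ₀ * ((μ₀ + σ₀/(4*ε)) - μ₀)) = -(1/(4*ε)) := by
      field_simp
      ring
    have hexpA : Real.exp (-((m:ℝ)/(4*ε))) ≤ Real.exp (-(1/(4*ε))) := by
      apply Real.exp_le_exp.mpr
      have : (1:ℝ)/(4*ε) ≤ (m:ℝ)/(4*ε) := by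
        apply div_le_div_of_nonneg_right hm1 (by positivity)
      linarith
    have hreal : (σ₀⁻¹ * ((m:ℝ)+1)^(m+1)) *
          Real.exp (((m:ℝ)/σ₀) * ((μ₀ - σ₀/(4*ε)) - μ₀)) / ((m:ℝ)/σ₀) +
          σ₀⁻¹ * Real.exp (-(1/σ₀ * ((μ₀ + σ₀/(4*ε)) - μ₀))) / (1/σ₀) ≤
        1728 * (1 + (σ₀⁻¹ * ((m:ℝ)+1)^(m+1)) / ((m:ℝ)/σ₀)) * ε^3 := by
      rw [hargA, hargB]
      have hB2 : σ₀⁻¹ * Real.exp (-(1/(4*ε))) / (1/σ₀) = Real.exp (-(1/(4*ε))) := by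
        field_simp
      rw [hB2]
      have hA2 : (σ₀⁻¹ * ((m:ℝ)+1)^(m+1)) * Real.exp (-((m:ℝ)/(4*ε))) / ((m:ℝ)/σ₀) ≤
          ((σ₀⁻¹ * ((m:ℝ)+1)^(m+1)) / ((m:ℝ)/σ₀)) * (1728 * ε^3) := by
        rw [mul_comm (σ₀⁻¹ * ((m:ℝ)+1)^(m+1)) (Real.exp (-((m:ℝ)/(4*ε)))),
          mul_div_assoc]
        calc Real.exp (-((m:ℝ)/(4*ε))) * ((σ₀⁻¹ * ((m:ℝ)+1)^(m+1)) / ((m:ℝ)/σ₀))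
            ≤ (1728 * ε^3) * ((σ₀⁻¹ * ((m:ℝ)+1)^(m+1)) / ((m:ℝ)/σ₀)) :=
              mul_le_mul_of_nonneg_right (hexpA.trans hexp) (by positivity)
          _ = ((σ₀⁻¹ * ((m:ℝ)+1)^(m+1)) / ((m:ℝ)/σ₀)) * (1728 * ε^3) := by ring
      calc (σ₀⁻¹ * ((m:ℝ)+1)^(m+1)) * Real.exp (-((m:ℝ)/(4*ε))) / ((m:ℝ)/σ₀) +
            Real.exp (-(1/(4*ε)))
          ≤ ((σ₀⁻¹ * ((m:ℝ)+1)^(m+1)) / ((m:ℝ)/σ₀)) * (1728 * ε^3) + 1728 * ε^3 := by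
            exact add_le_add hA2 hexp
        _ = 1728 * (1 + (σ₀⁻¹ * ((m:ℝ)+1)^(m+1)) / ((m:ℝ)/σ₀)) * ε^3 := by ring
    calc (gevMeasure ((0, μ₀, σ₀) : ℝ × ℝ × ℝ)
          {x : ℝ | ∀ θ : ℝ × ℝ × ℝ, 0 < θ.2.2 →
            ‖θ - ((0, μ₀, σ₀) : ℝ × ℝ × ℝ)‖ < ε → 0 < θ.2.2 + θ.1 * (x - θ.2.1)}ᶜ).toReal
        ≤ ((σ₀⁻¹ * ((m:ℝ)+1)^(m+1)) *
            Real.exp (((m:ℝ)/σ₀) * ((μ₀ - σ₀/(4*ε)) - μ₀)) / ((m:ℝ)/σ₀) +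
            σ₀⁻¹ * Real.exp (-(1/σ₀ * ((μ₀ + σ₀/(4*ε)) - μ₀))) / (1/σ₀)) := by
          refine ENNReal.toReal_mono ENNReal.ofReal_ne_top htotal |>.trans ?_
          rw [ENNReal.toReal_ofReal (by linarith [hAnn, hBnn])]
      _ ≤ 1728 * (1 + (σ₀⁻¹ * ((m:ℝ)+1)^(m+1)) / ((m:ℝ)/σ₀)) * ε^3 := hreal
      _ = 1728 * (1 + (σ₀⁻¹ * ((m:ℝ)+1)^(m+1)) / ((m:ℝ)/σ₀)) * ε^(3:ℝ) := by
          rw [show (3:ℝ) = ((3:ℕ):ℝ) by norm_num, Real.rpow_natCast]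
  · -- case γ₀ > 0
    have hγne : γ₀ ≠ 0 := ne_of_gt hpos
    set K := (σ₀ + γ₀ ^ 2 + 2 * γ₀) / γ₀ with hKdef
    have hKpos : 0 < K := div_pos (by nlinarith) hpos
    refine aux_reduce (fun ε => ENNReal.toReal_nonneg)
      (C := σ₀⁻¹ * (3 * γ₀ + 1) ^ (3 * γ₀ + 1) * ((K / σ₀) ^ (2:ℕ) * (K / γ₀)))
      (show (2:ℝ) < 3 by norm_num) ?_
    have hε₀ : (0:ℝ) < min 1 (min (γ₀/2) (σ₀/2)) :=
      lt_min one_pos (lt_min (by linarith) (by linarith))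
    filter_upwards [Ioo_mem_nhdsGT_of_mem (left_mem_Ico.mpr hε₀)] with ε hε
    obtain ⟨hε0, hεlt⟩ := hε
    have hε1 : ε ≤ 1 := hεlt.le.trans (min_le_left _ _)
    have hεγ : ε < γ₀/2 := lt_of_lt_of_le hεlt ((min_le_right _ _).trans (min_le_left _ _))
    have hεσ : ε < σ₀/2 := lt_of_lt_of_le hεlt ((min_le_right _ _).trans (min_le_right _ _))
    set M := σ₀⁻¹ * (3 * γ₀ + 1) ^ (3 * γ₀ + 1) * ((K * ε) / σ₀) ^ (2:ℝ) with hMdef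
    have hMnn : 0 ≤ M := by
      apply mul_nonneg
      apply mul_nonneg (by positivity)
      · exact Real.rpow_nonneg (by linarith) _
      · exact Real.rpow_nonneg (by positivity) _
    have hsub : {x : ℝ | ∀ θ : ℝ × ℝ × ℝ, 0 < θ.2.2 →
        ‖θ - ((γ₀, μ₀, σ₀) : ℝ × ℝ × ℝ)‖ < ε → 0 < θ.2.2 + θ.1 * (x - θ.2.1)}ᶜ ⊆
        {x : ℝ | σ₀ + γ₀ * (x - μ₀) ≤ K * ε} := by
      intro x hx
      obtain ⟨γ, μ, σ, hσ', h1, h2, h3, h0⟩ := aux_compl γ₀ μ₀ σ₀ ε x hx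
      exact aux_arith_pos γ₀ μ₀ σ₀ ε x γ μ σ hσ hpos hε0 hε1 hεγ hεσ hσ' h1 h2 h3 h0
    have hbound : ∀ x : ℝ, 0 < σ₀ + γ₀ * (x - μ₀) → σ₀ + γ₀ * (x - μ₀) ≤ K * ε →
        gevDensity (γ₀, μ₀, σ₀) x ≤ M :=
      fun x hx1 hx2 => aux_density_pos γ₀ μ₀ σ₀ hσ hpos x (K * ε) hx1 hx2
    have hcore := aux_meas_core γ₀ μ₀ σ₀ hγne (K * ε) M hMnn hbound
    have hmono := measure_mono (μ := gevMeasure ((γ₀, μ₀, σ₀) : ℝ × ℝ × ℝ)) hsub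
    calc (gevMeasure ((γ₀, μ₀, σ₀) : ℝ × ℝ × ℝ)
          {x : ℝ | ∀ θ : ℝ × ℝ × ℝ, 0 < θ.2.2 →
            ‖θ - ((γ₀, μ₀, σ₀) : ℝ × ℝ × ℝ)‖ < ε → 0 < θ.2.2 + θ.1 * (x - θ.2.1)}ᶜ).toReal
        ≤ (ENNReal.ofReal (M * (K * ε / |γ₀|))).toReal :=
          ENNReal.toReal_mono ENNReal.ofReal_ne_top (le_trans hmono hcore)
      _ = M * (K * ε / |γ₀|) := ENNReal.toReal_ofReal (mul_nonneg hMnn (by positivity))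
      _ = σ₀⁻¹ * (3 * γ₀ + 1) ^ (3 * γ₀ + 1) * ((K / σ₀) ^ (2:ℕ) * (K / γ₀)) * ε ^ (3:ℝ) := by
          rw [hMdef, abs_of_pos hpos,
            show ((K * ε) / σ₀ : ℝ) ^ (2:ℝ) = ((K * ε) / σ₀) ^ (2:ℕ) by
              rw [← Real.rpow_natCast ((K * ε) / σ₀) 2]; norm_num,
            show (ε : ℝ) ^ (3:ℝ) = ε ^ (3:ℕ) by
              rw [← Real.rpow_natCast ε 3]; norm_num]
          ring
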